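/- For every bounded set F ⊆ ℝⁿ, the maps θ ↦ (lower θ-intermediate dimension of F) and θ ↦ (upper θ-intermediate dimension of F) are continuous on (0,1]. -/

import Mathlib

open Set Metric MeasureTheory ENNReal

/-- A cover of `F` witnessing the `θ`-intermediate dimension sum condition at scale `δ`:
a countable cover by sets of diameter between `δ^(1/θ)` and `δ` whose `s`-power diameter
sum is at most `ε`.  (When `θ = 0` the lower bound on diameters is vacuous, recovering
the Hausdorff dimension condition.) -/
def interCoverSum {X : Type*} [PseudoMetricSpace X]
    (θ δ s ε : ℝ) (F : Set X) : Prop :=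
  ∃ 𝒰 : Set (Set X), 𝒰.Countable ∧ F ⊆ ⋃₀ 𝒰 ∧
    (∀ U ∈ 𝒰, EMetric.diam U ≤ ENNReal.ofReal δ ∧
      (θ ≠ 0 → ENNReal.ofReal (δ ^ (1 / θ)) ≤ EMetric.diam U)) ∧
    ∑' U : 𝒰, EMetric.diam (U : Set X) ^ s ≤ ENNReal.ofReal ε

/-- The lower `θ`-intermediate dimension of `F`. -/
noncomputable def lowerInterDim {X : Type*} [PseudoMetricSpace X] (θ : ℝ) (F : Set X) : ℝ :=
  sInf {s : ℝ | 0 ≤ s ∧ ∀ ε > 0, ∀ δ₀ > 0, ∃ δ, 0 < δ ∧ δ ≤ δ₀ ∧ interCoverSum θ δ s ε F}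

/-- The upper `θ`-intermediate dimension of `F`. -/
noncomputable def upperInterDim {X : Type*} [PseudoMetricSpace X] (θ : ℝ) (F : Set X) : ℝ :=
  sInf {s : ℝ | 0 ≤ s ∧ ∀ ε > 0, ∃ δ₀ > 0, ∀ δ, 0 < δ → δ ≤ δ₀ → interCoverSum θ δ s ε F}

/-- Lower box-counting dimension: the `θ = 1` lower intermediate dimension, i.e. covers
by sets all of the same diameter. -/
noncomputable def lowerBoxDim {X : Type*} [PseudoMetricSpace X] (F : Set X) : ℝ :=
  lowerInterDim 1 F

/-- Upper box-counting dimension: the `θ = 1` upper intermediate dimension. -/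
noncomputable def upperBoxDim {X : Type*} [PseudoMetricSpace X] (F : Set X) : ℝ :=
  upperInterDim 1 F


set_option maxHeartbeats 1000000

section Aux


variable {n : ℕ}

def lowSet {X : Type*} [PseudoMetricSpace X] (θ : ℝ) (F : Set X) : Set ℝ :=
  {s : ℝ | 0 ≤ s ∧ ∀ ε > 0, ∀ δ₀ > 0, ∃ δ, 0 < δ ∧ δ ≤ δ₀ ∧ interCoverSum θ δ s ε F}

def upSet {X : Type*} [PseudoMetricSpace X] (θ : ℝ) (F : Set X) : Set ℝ :=
  {s : ℝ | 0 ≤ s ∧ ∀ ε > 0, ∃ δ₀ > 0, ∀ δ, 0 < δ → δ ≤ δ₀ → interCoverSum θ δ s ε F}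

lemma upSet_subset_lowSet {X : Type*} [PseudoMetricSpace X] (θ : ℝ) (F : Set X) :
    upSet θ F ⊆ lowSet θ F := by
  rintro s ⟨h0, h⟩
  refine ⟨h0, fun ε hε δ₀' hδ₀' => ?_⟩
  obtain ⟨δ₀, hδ₀, hall⟩ := h ε hε
  exact ⟨min δ₀ δ₀', lt_min hδ₀ hδ₀', min_le_right _ _,
    hall _ (lt_min hδ₀ hδ₀') (min_le_left _ _)⟩

lemma interCoverSum_mono {X : Type*} [PseudoMetricSpace X] {θ φ δ s ε : ℝ}
    (hθ : 0 < θ) (hθφ : θ ≤ φ) (hδ : 0 < δ) (hδ1 : δ ≤ 1) {F : Set X}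
    (h : interCoverSum φ δ s ε F) : interCoverSum θ δ s ε F := by
  obtain ⟨𝒰, hc, hcov, hd, hsum⟩ := h
  refine ⟨𝒰, hc, hcov, fun U hU => ⟨(hd U hU).1, fun _ => ?_⟩, hsum⟩
  refine le_trans (ENNReal.ofReal_le_ofReal ?_) ((hd U hU).2 (hθ.trans_le hθφ).ne')
  exact Real.rpow_le_rpow_of_exponent_ge hδ hδ1
    (one_div_le_one_div_of_le hθ hθφ)

lemma lowSet_anti {X : Type*} [PseudoMetricSpace X] {θ φ : ℝ} (hθ : 0 < θ) (hθφ : θ ≤ φ)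
    (F : Set X) : lowSet φ F ⊆ lowSet θ F := by
  rintro s ⟨h0, h⟩
  refine ⟨h0, fun ε hε δ₀ hδ₀ => ?_⟩
  obtain ⟨δ, hδ, hδle, hcov⟩ := h ε hε (min δ₀ 1) (lt_min hδ₀ one_pos)
  exact ⟨δ, hδ, hδle.trans (min_le_left _ _),
    interCoverSum_mono hθ hθφ hδ (hδle.trans (min_le_right _ _)) hcov⟩

lemma upSet_anti {X : Type*} [PseudoMetricSpace X] {θ φ : ℝ} (hθ : 0 < θ) (hθφ : θ ≤ φ)
    (F : Set X) : upSet φ F ⊆ upSet θ F := by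
  rintro s ⟨h0, h⟩
  refine ⟨h0, fun ε hε => ?_⟩
  obtain ⟨δ₀, hδ₀, hall⟩ := h ε hε
  refine ⟨min δ₀ 1, lt_min hδ₀ one_pos, fun δ hδ hδle => ?_⟩
  exact interCoverSum_mono hθ hθφ hδ (hδle.trans (min_le_right _ _))
    (hall δ hδ (hδle.trans (min_le_left _ _)))

lemma ediam_closedBall' (hn : 0 < n) (x : EuclideanSpace ℝ (Fin n)) {r : ℝ} (hr : 0 ≤ r) :
    EMetric.diam (Metric.closedBall x r) = ENNReal.ofReal (2 * r) := by
  apply le_antisymm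
  · rw [← Metric.emetric_closedBall hr]
    calc EMetric.diam (EMetric.closedBall x (ENNReal.ofReal r)) ≤ 2 * ENNReal.ofReal r :=
          EMetric.diam_closedBall
      _ = ENNReal.ofReal (2 * r) := by
          rw [ENNReal.ofReal_mul (by norm_num)]; norm_num
  · set e : EuclideanSpace ℝ (Fin n) := EuclideanSpace.single ⟨0, hn⟩ 1 with he
    have hne : ‖e‖ = 1 := by simp [he]
    have h1 : x + r • e ∈ Metric.closedBall x r := by
      simp [Metric.mem_closedBall, dist_eq_norm, norm_smul, hne, abs_of_nonneg hr]
    have h2 : x - r • e ∈ Metric.closedBall x r := by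
      simp [Metric.mem_closedBall, dist_eq_norm, norm_smul, hne, abs_of_nonneg hr]
    have hd : edist (x + r • e) (x - r • e) = ENNReal.ofReal (2 * r) := by
      rw [edist_dist, dist_eq_norm]
      congr 1
      have : (x + r • e) - (x - r • e) = (2 * r) • e := by
        rw [two_mul, add_smul]; abel
      rw [this, norm_smul, hne, mul_one, Real.norm_eq_abs, abs_of_nonneg (by positivity)]
    rw [← hd]
    exact EMetric.edist_le_diam_of_mem h1 h2

lemma interCoverSum_scale (hn : 0 < n) {θ φ s t δ ε : ℝ}
    (hθ : 0 < θ) (hθφ : θ ≤ φ) (hφ1 : φ ≤ 1) (hs : 0 ≤ s) (ht : s * φ / θ ≤ t)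
    (hδ : 0 < δ) (hδ2 : 2 * δ ≤ 1) {F : Set (EuclideanSpace ℝ (Fin n))}
    (h : interCoverSum θ δ s ε F) :
    interCoverSum φ (2 * δ) t (2 ^ (t / φ) * ε) F := by
  have hφ : 0 < φ := hθ.trans_le hθφ
  have hδ1 : δ ≤ 1 := by linarith
  have hts : s ≤ t := le_trans (by rw [le_div_iff₀ hθ]; nlinarith) ht
  have ht0 : 0 ≤ t := le_trans hs hts
  have h2δ : (0:ℝ) < 2 * δ := by linarith
  obtain ⟨𝒰, h𝒰c, h𝒰cov, h𝒰d, h𝒰s⟩ := h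
  -- the lower diameter bound in real terms
  have hlow : ∀ U ∈ 𝒰, δ ^ (1 / θ) ≤ Metric.diam U := by
    intro U hU
    have h1 := (h𝒰d U hU).2 hθ.ne'
    have h2 : EMetric.diam U ≠ ⊤ := ((h𝒰d U hU).1.trans_lt ofReal_lt_top).ne
    have := ENNReal.toReal_mono h2 h1
    rwa [ENNReal.toReal_ofReal (Real.rpow_nonneg hδ.le _)] at this
  have hdpos : ∀ U ∈ 𝒰, 0 < Metric.diam U := fun U hU =>
    lt_of_lt_of_le (Real.rpow_pos_of_pos hδ _) (hlow U hU)
  have hdle : ∀ U ∈ 𝒰, Metric.diam U ≤ δ := by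
    intro U hU
    exact ENNReal.toReal_le_of_le_ofReal hδ.le (h𝒰d U hU).1
  have hne : ∀ U ∈ 𝒰, U.Nonempty := by
    intro U hU
    rcases U.eq_empty_or_nonempty with h | h
    · exfalso; have := hdpos U hU; rw [h] at this; simp [Metric.diam] at this
    · exact h
  -- the enlargement radius
  set c : ℝ := (2 * δ) ^ (1 / φ) / 2 with hc
  have hcpos : 0 < c := by positivity
  have hcδ : c ≤ δ := by
    have : (2 * δ) ^ (1 / φ) ≤ (2 * δ) ^ (1 : ℝ) :=
      Real.rpow_le_rpow_of_exponent_ge h2δ hδ2 (by rw [le_div_iff₀ hφ]; linarith)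
    rw [Real.rpow_one] at this; rw [hc]; linarith
  -- choice of points
  choose x hx using fun U : 𝒰 => hne U U.2
  let r : ↥𝒰 → ℝ := fun U => max (Metric.diam (U : Set (EuclideanSpace ℝ (Fin n)))) c
  let f : ↥𝒰 → Set (EuclideanSpace ℝ (Fin n)) := fun U => Metric.closedBall (x U) (r U)
  have hrpos : ∀ U, 0 < r U := fun U => lt_max_of_lt_right hcpos
  have hrδ : ∀ U, r U ≤ δ := fun U => max_le (hdle U U.2) hcδ
  have hsub : ∀ U : ↥𝒰, (U : Set (EuclideanSpace ℝ (Fin n))) ⊆ f U := by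
    intro U y hy
    have hb : Bornology.IsBounded (U : Set (EuclideanSpace ℝ (Fin n))) :=
      Metric.isBounded_iff_ediam_ne_top.2 (((h𝒰d U U.2).1.trans_lt ofReal_lt_top).ne)
    have hd : dist y (x U) ≤ Metric.diam (U : Set (EuclideanSpace ℝ (Fin n))) :=
      Metric.dist_le_diam_of_mem hb hy (hx U)
    exact Metric.mem_closedBall.2 (hd.trans (le_max_left _ _))
  have hdiamf : ∀ U, EMetric.diam (f U) = ENNReal.ofReal (2 * r U) := fun U =>
    ediam_closedBall' hn _ (hrpos U).le
  haveI := h𝒰c.to_subtype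
  refine ⟨range f, (countable_range _), ?_, ?_, ?_⟩
  · intro y hy
    obtain ⟨U, hU, hyU⟩ := h𝒰cov hy
    exact ⟨f ⟨U, hU⟩, mem_range_self _, hsub ⟨U, hU⟩ hyU⟩
  · rintro V ⟨U, rfl⟩
    rw [hdiamf]
    constructor
    · exact ENNReal.ofReal_le_ofReal (by have := hrδ U; linarith)
    · intro _
      apply ENNReal.ofReal_le_ofReal
      calc (2*δ) ^ (1/φ) = 2 * c := by rw [hc]; ring
        _ ≤ 2 * r U := by have : c ≤ r U := le_max_right _ _; linarith
  · -- the sum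
    calc ∑' V : ↥(range f), EMetric.diam (V : Set (EuclideanSpace ℝ (Fin n))) ^ t
        ≤ ∑' U : ↥𝒰, EMetric.diam (f U) ^ t := by
          have hsurj : Function.Surjective (Set.rangeFactorization f) :=
            Set.rangeFactorization_surjective
          exact ENNReal.tsum_le_tsum_comp_of_surjective hsurj _
      _ ≤ ∑' U : ↥𝒰, ENNReal.ofReal (2 ^ (t / φ)) * EMetric.diam (U : Set (EuclideanSpace ℝ (Fin n))) ^ s := by
          apply ENNReal.tsum_le_tsum
          intro U
          rw [hdiamf]
          have hd0 := hdpos U U.2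
          have key : (2 * r U) ^ t ≤ 2 ^ (t / φ) * Metric.diam (U : Set (EuclideanSpace ℝ (Fin n))) ^ s := by
            have hdle1 : Metric.diam (U : Set (EuclideanSpace ℝ (Fin n))) ≤ 1 := le_trans (hdle U U.2) hδ1
            rcases le_total c (Metric.diam (U : Set (EuclideanSpace ℝ (Fin n)))) with hcd | hcd
            · have hr : r U = Metric.diam (U : Set (EuclideanSpace ℝ (Fin n))) := max_eq_left hcd
              rw [hr, Real.mul_rpow (by norm_num) hd0.le]
              have h1 : (2:ℝ) ^ t ≤ 2 ^ (t / φ) :=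
                Real.rpow_le_rpow_of_exponent_le one_le_two
                  (by rw [le_div_iff₀ hφ]; nlinarith)
              have h2 : Metric.diam (U : Set (EuclideanSpace ℝ (Fin n))) ^ t ≤ Metric.diam (U : Set (EuclideanSpace ℝ (Fin n))) ^ s :=
                Real.rpow_le_rpow_of_exponent_ge hd0 hdle1 hts
              apply mul_le_mul h1 h2 (Real.rpow_nonneg hd0.le _) (Real.rpow_nonneg (by norm_num) _)
            · have hr : r U = c := max_eq_right hcd
              have h2c : 2 * r U = (2 * δ) ^ (1 / φ) := by rw [hr, hc]; ring
              rw [h2c]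
              have ht' : s * φ ≤ t * θ := (div_le_iff₀ hθ).mp ht
              have e1 : ((2*δ)^(1/φ))^t = (2*δ)^(t/φ) := by
                rw [← Real.rpow_mul h2δ.le]; ring_nf
              have e2 : (2*δ)^(t/φ) = 2^(t/φ) * δ^(t/φ) := Real.mul_rpow (by norm_num) hδ.le
              have e3 : δ^(t/φ) ≤ δ^(s/θ) := by
                apply Real.rpow_le_rpow_of_exponent_ge hδ hδ1
                rw [div_le_div_iff₀ hθ hφ]; nlinarith
              have e4 : δ^(s/θ) = (δ^(1/θ))^s := by
                rw [← Real.rpow_mul hδ.le]; congr 1; field_simp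
              have e5 : (δ^(1/θ))^s ≤ Metric.diam (U : Set (EuclideanSpace ℝ (Fin n))) ^ s :=
                Real.rpow_le_rpow (Real.rpow_nonneg hδ.le _) (hlow U U.2) hs
              calc ((2*δ)^(1/φ))^t = 2^(t/φ) * δ^(t/φ) := by rw [e1, e2]
                _ ≤ 2^(t/φ) * δ^(s/θ) := by
                    apply mul_le_mul_of_nonneg_left e3 (Real.rpow_nonneg (by norm_num) _)
                _ ≤ 2^(t/φ) * Metric.diam (U : Set (EuclideanSpace ℝ (Fin n))) ^ s := by
                    rw [e4]
                    apply mul_le_mul_of_nonneg_left e5 (Real.rpow_nonneg (by norm_num) _)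
          calc ENNReal.ofReal (2 * r U) ^ t
              = ENNReal.ofReal ((2 * r U) ^ t) := by
                rw [ENNReal.ofReal_rpow_of_nonneg (by positivity) ht0]
            _ ≤ ENNReal.ofReal (2 ^ (t / φ) * Metric.diam (U : Set (EuclideanSpace ℝ (Fin n))) ^ s) :=
                ENNReal.ofReal_le_ofReal key
            _ = ENNReal.ofReal (2 ^ (t / φ)) * ENNReal.ofReal (Metric.diam (U : Set (EuclideanSpace ℝ (Fin n))) ^ s) := by
                rw [ENNReal.ofReal_mul (by positivity)]
            _ = ENNReal.ofReal (2 ^ (t / φ)) * EMetric.diam (U : Set (EuclideanSpace ℝ (Fin n))) ^ s := by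
                congr 1
                rw [← ENNReal.ofReal_rpow_of_nonneg Metric.diam_nonneg hs]
                congr 1
                rw [Metric.diam, ENNReal.ofReal_toReal]
                · rfl
                exact ((h𝒰d U U.2).1.trans_lt ofReal_lt_top).ne
      _ = ENNReal.ofReal (2 ^ (t / φ)) * ∑' U : ↥𝒰, EMetric.diam (U : Set (EuclideanSpace ℝ (Fin n))) ^ s :=
          ENNReal.tsum_mul_left
      _ ≤ ENNReal.ofReal (2 ^ (t / φ)) * ENNReal.ofReal ε :=
          mul_le_mul_right h𝒰s _
      _ = ENNReal.ofReal (2 ^ (t / φ) * ε) := by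
          rcases le_total ε 0 with hε | hε
          · have h1 : ENNReal.ofReal ε = 0 := ENNReal.ofReal_eq_zero.2 hε
            have h2 : ENNReal.ofReal (2 ^ (t / φ) * ε) = 0 := ENNReal.ofReal_eq_zero.2
              (mul_nonpos_of_nonneg_of_nonpos (by positivity : (0:ℝ) ≤ 2 ^ (t / φ)) hε)
            rw [h1, h2, mul_zero]
          · rw [ENNReal.ofReal_mul (by positivity)]

lemma lowSet_scale (hn : 0 < n) {θ φ s : ℝ} (hθ : 0 < θ) (hθφ : θ ≤ φ) (hφ1 : φ ≤ 1)
    {F : Set (EuclideanSpace ℝ (Fin n))} (hs : s ∈ lowSet θ F) :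
    s * φ / θ ∈ lowSet φ F := by
  obtain ⟨h0, h⟩ := hs
  have hφ : 0 < φ := hθ.trans_le hθφ
  set t := s * φ / θ with htdef
  have ht0 : 0 ≤ t := by positivity
  have hpow : (0:ℝ) < 2 ^ (t / φ) := by positivity
  refine ⟨ht0, fun ε hε δ₀ hδ₀ => ?_⟩
  obtain ⟨δ, hδ, hδle, hcov⟩ := h (ε / 2 ^ (t / φ)) (by positivity)
    (min (δ₀ / 2) (1 / 2)) (by positivity)
  have h1 : δ ≤ δ₀ / 2 := hδle.trans (min_le_left _ _)
  have h2 : 2 * δ ≤ 1 := by have := hδle.trans (min_le_right _ _); linarith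
  refine ⟨2 * δ, by linarith, by linarith, ?_⟩
  have := interCoverSum_scale hn hθ hθφ hφ1 h0 le_rfl hδ h2 hcov
  rwa [mul_div_cancel₀ _ hpow.ne'] at this

lemma upSet_scale (hn : 0 < n) {θ φ s : ℝ} (hθ : 0 < θ) (hθφ : θ ≤ φ) (hφ1 : φ ≤ 1)
    {F : Set (EuclideanSpace ℝ (Fin n))} (hs : s ∈ upSet θ F) :
    s * φ / θ ∈ upSet φ F := by
  obtain ⟨h0, h⟩ := hs
  have hφ : 0 < φ := hθ.trans_le hθφ
  set t := s * φ / θ with htdef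
  have ht0 : 0 ≤ t := by positivity
  have hpow : (0:ℝ) < 2 ^ (t / φ) := by positivity
  refine ⟨ht0, fun ε hε => ?_⟩
  obtain ⟨δ₀, hδ₀, hall⟩ := h (ε / 2 ^ (t / φ)) (by positivity)
  refine ⟨min (2 * δ₀) 1, by positivity, fun δ' hδ' hδ'le => ?_⟩
  have h1 : δ' / 2 ≤ δ₀ := by
    have := hδ'le.trans (min_le_left _ _); linarith
  have h2 : 2 * (δ' / 2) ≤ 1 := by
    have := hδ'le.trans (min_le_right _ _); linarith
  have := interCoverSum_scale hn hθ hθφ hφ1 h0 le_rfl (by linarith : (0:ℝ) < δ' / 2) h2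
    (hall (δ' / 2) (by linarith) h1)
  rw [mul_div_cancel₀ _ hpow.ne'] at this
  have hrw : 2 * (δ' / 2) = δ' := by ring
  rwa [hrw] at this

lemma coord_abs_le_norm (x : EuclideanSpace ℝ (Fin n)) (i : Fin n) : |x i| ≤ ‖x‖ := by
  rw [EuclideanSpace.norm_eq]
  have h1 : |x i| = Real.sqrt (‖x i‖ ^ 2) := by
    rw [Real.sqrt_sq_eq_abs, Real.norm_eq_abs, abs_abs]
  rw [h1]
  apply Real.sqrt_le_sqrt
  exact Finset.single_le_sum (f := fun j => ‖x j‖ ^ 2)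
    (fun j _ => by positivity) (Finset.mem_univ i)

lemma mem_upSet_bound (hn : 0 < n) {F : Set (EuclideanSpace ℝ (Fin n))}
    (hF : Bornology.IsBounded F) {θ : ℝ} (hθ : 0 < θ) (hθ1 : θ ≤ 1) :
    ((n : ℝ) + 1) ∈ upSet θ F := by
  obtain ⟨R₀, hR₀⟩ := hF.subset_closedBall 0
  set R : ℝ := max R₀ 1 with hRdef
  have hR1 : (1:ℝ) ≤ R := le_max_right _ _
  have hR0 : (0:ℝ) < R := by linarith
  have hFR : ∀ x ∈ F, ‖x‖ ≤ R := by
    intro x hx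
    have := hR₀ hx
    rw [Metric.mem_closedBall, dist_zero_right] at this
    exact this.trans (le_max_left _ _)
  have hsq : (1:ℝ) ≤ Real.sqrt n := by
    rw [show (1:ℝ) = Real.sqrt 1 by simp]
    exact Real.sqrt_le_sqrt (by exact_mod_cast hn)
  have hsq0 : (0:ℝ) < Real.sqrt n := by linarith
  set C : ℝ := 4 * Real.sqrt n * R + 5 with hCdef
  have hC1 : (1:ℝ) ≤ C := by nlinarith
  have hC0 : (0:ℝ) < C := by linarith
  refine ⟨by positivity, fun ε hε => ?_⟩
  refine ⟨min 1 (ε / C ^ n), by positivity, fun δ hδ hδle => ?_⟩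
  have hδ1 : δ ≤ 1 := hδle.trans (min_le_left _ _)
  have hδε : δ ≤ ε / C ^ n := hδle.trans (min_le_right _ _)
  -- the grid
  set a : ℝ := δ / (2 * Real.sqrt n) with hadef
  have ha0 : 0 < a := by positivity
  set K : ℤ := ⌈R / a⌉ + 1 with hKdef
  have hK1 : (1:ℤ) ≤ K := by
    have : (0:ℝ) ≤ R / a := by positivity
    have := Int.ceil_nonneg this
    omega
  set T : Finset (Fin n → ℤ) := Fintype.piFinset fun _ => Finset.Icc (-K) K with hTdef
  set p : (Fin n → ℤ) → EuclideanSpace ℝ (Fin n) := fun z => WithLp.toLp 2 (fun i => a * z i) with hpdef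
  set g : (Fin n → ℤ) → Set (EuclideanSpace ℝ (Fin n)) :=
    fun z => Metric.closedBall (p z) (δ / 2) with hgdef
  refine ⟨g '' ↑T, (T.countable_toSet).image g, ?_, ?_, ?_⟩
  · -- coverage
    intro x hx
    set z : Fin n → ℤ := fun i => ⌊x i / a⌋ with hzdef
    have hzmem : z ∈ T := by
      rw [hTdef, Fintype.mem_piFinset]
      intro i
      rw [Finset.mem_Icc]
      have hxi : |x i| ≤ R := (coord_abs_le_norm x i).trans (hFR x hx)
      obtain ⟨hxl, hxu⟩ := abs_le.mp hxi
      have hceil : (R / a : ℝ) ≤ (⌈R / a⌉ : ℝ) := Int.le_ceil _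
      have hKcast : ((K : ℤ) : ℝ) = (⌈R / a⌉ : ℝ) + 1 := by rw [hKdef]; push_cast; ring
      constructor
      · have h1 : x i / a - 1 < (z i : ℝ) := by
          rw [hzdef]; exact Int.sub_one_lt_floor _
        have h2 : -R / a ≤ x i / a := (div_le_div_iff_of_pos_right ha0).mpr hxl
        have : (-K : ℝ) ≤ (z i : ℝ) := by
          push_cast
          rw [hKcast] at *
          have hneg : -((⌈R / a⌉ : ℝ) + 1) ≤ x i / a - 1 := by
            rw [neg_div] at h2; linarith
          linarith
        exact_mod_cast this
      · have h1 : (z i : ℝ) ≤ x i / a := by rw [hzdef]; exact Int.floor_le _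
        have h2 : x i / a ≤ R / a := (div_le_div_iff_of_pos_right ha0).mpr hxu
        have : (z i : ℝ) ≤ (K : ℝ) := by rw [hKcast]; linarith
        exact_mod_cast this
    refine ⟨g z, mem_image_of_mem g hzmem, ?_⟩
    rw [hgdef, Metric.mem_closedBall, EuclideanSpace.dist_eq]
    have hbound : ∀ i, dist (x i) (p z i) ≤ a := by
      intro i
      rw [hpdef]
      simp only [Real.dist_eq, PiLp.toLp_apply]
      have h1 : a * (z i : ℝ) ≤ x i := by
        rw [hzdef]
        have := Int.floor_le (x i / a)
        calc a * (⌊x i / a⌋ : ℝ) ≤ a * (x i / a) :=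
              mul_le_mul_of_nonneg_left this ha0.le
          _ = x i := by field_simp
      have h2 : x i < a * (z i : ℝ) + a := by
        rw [hzdef]
        have := Int.lt_floor_add_one (x i / a)
        have h3 : x i / a < (⌊x i / a⌋ : ℝ) + 1 := this
        calc x i = a * (x i / a) := by field_simp
          _ < a * ((⌊x i / a⌋ : ℝ) + 1) := by
              apply mul_lt_mul_of_pos_left h3 ha0
          _ = a * (⌊x i / a⌋ : ℝ) + a := by ring
      rw [abs_le]
      constructor <;> nlinarith
    calc Real.sqrt (∑ i, dist (x i) (p z i) ^ 2)
        ≤ Real.sqrt (∑ _i : Fin n, a ^ 2) := by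
          apply Real.sqrt_le_sqrt
          apply Finset.sum_le_sum
          intro i _
          have := hbound i
          nlinarith [dist_nonneg (x := x i) (y := p z i)]
      _ = Real.sqrt n * a := by
          rw [Finset.sum_const, Finset.card_univ, Fintype.card_fin, nsmul_eq_mul,
            Real.sqrt_mul (by positivity), Real.sqrt_sq ha0.le]
      _ = δ / 2 := by
          rw [hadef]; field_simp
  · -- diameter bounds
    rintro U ⟨z, hz, rfl⟩
    rw [hgdef]
    have hdiam : EMetric.diam (Metric.closedBall (p z) (δ / 2)) = ENNReal.ofReal δ := by
      rw [ediam_closedBall' hn _ (by positivity : (0:ℝ) ≤ δ / 2)]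
      congr 1; ring
    rw [hdiam]
    refine ⟨le_rfl, fun _ => ENNReal.ofReal_le_ofReal ?_⟩
    calc δ ^ (1 / θ) ≤ δ ^ (1:ℝ) :=
          Real.rpow_le_rpow_of_exponent_ge hδ hδ1 (by rw [le_div_iff₀ hθ]; linarith)
      _ = δ := Real.rpow_one δ
  · -- the sum
    have hdiam : ∀ z : Fin n → ℤ, EMetric.diam (g z) = ENNReal.ofReal δ := by
      intro z
      rw [hgdef, ediam_closedBall' hn _ (by positivity : (0:ℝ) ≤ δ / 2)]
      congr 1; ring
    have himg : g '' ↑T = range (fun z : ↥(↑T : Set (Fin n → ℤ)) => g z) :=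
      Set.image_eq_range g ↑T
    calc ∑' U : ↥(g '' ↑T), EMetric.diam (U : Set (EuclideanSpace ℝ (Fin n))) ^ ((n:ℝ)+1)
        ≤ ∑' z : ↥(↑T : Set (Fin n → ℤ)), EMetric.diam (g z) ^ ((n:ℝ)+1) := by
          rw [himg]
          exact ENNReal.tsum_le_tsum_comp_of_surjective Set.rangeFactorization_surjective _
      _ = ∑' _z : ↥(↑T : Set (Fin n → ℤ)), ENNReal.ofReal (δ ^ ((n:ℝ)+1)) := by
          congr 1; funext z
          rw [hdiam, ← ENNReal.ofReal_rpow_of_nonneg hδ.le (by positivity)]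
      _ = (T.card : ℝ≥0∞) * ENNReal.ofReal (δ ^ ((n:ℝ)+1)) := by
          rw [tsum_fintype, Finset.sum_const, Finset.card_univ, nsmul_eq_mul]
          congr 1
          simp [Fintype.card_coe]
      _ ≤ ENNReal.ofReal ε := by
          rw [← ENNReal.ofReal_natCast T.card, ← ENNReal.ofReal_mul (by positivity)]
          apply ENNReal.ofReal_le_ofReal
          -- key numeric estimate
          have hK0 : (0:ℤ) ≤ 2 * K + 1 := by omega
          have hTcard : T.card = (2 * K + 1).toNat ^ n := by
            rw [hTdef, Fintype.card_piFinset]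
            simp only [Int.card_Icc]
            rw [Finset.prod_const, Finset.card_univ, Fintype.card_fin]
            congr 1
            congr 1
            ring
          have h7 : (((2 * K + 1).toNat : ℕ) : ℝ) = ((2 * K + 1 : ℤ) : ℝ) := by
            exact_mod_cast congrArg (Int.cast : ℤ → ℝ) (Int.toNat_of_nonneg hK0)
          have hcast : ((T.card : ℝ)) = (((2 * K + 1 : ℤ) : ℝ)) ^ n := by
            rw [hTcard, Nat.cast_pow, h7]
          have hKR : ((2 * K + 1 : ℤ) : ℝ) ≤ C / δ := by
            have h1 : (⌈R / a⌉ : ℝ) < R / a + 1 := Int.ceil_lt_add_one _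
            have h2 : R / a = 2 * Real.sqrt n * R / δ := by
              rw [hadef]; field_simp
            have h3 : 4 * Real.sqrt n * R / δ + 5 / δ = C / δ := by
              rw [hCdef]; field_simp
            have h4 : (5:ℝ) ≤ 5 / δ := by
              rw [le_div_iff₀ hδ]; linarith
            have h5 : 4 * Real.sqrt n * R / δ + 5 ≤ C / δ := by
              rw [← h3]; linarith
            have h6 : (4:ℝ) * Real.sqrt n * R / δ = 2 * (R / a) := by rw [h2]; ring
            have h8 : ((2 * K + 1 : ℤ) : ℝ) = 2 * ((⌈R / a⌉ : ℤ) : ℝ) + 3 := by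
              rw [hKdef]; push_cast; ring
            rw [h8]
            linarith [h1]
          have hK0' : (0:ℝ) ≤ ((2 * K + 1 : ℤ) : ℝ) := by exact_mod_cast hK0
          have hpow : ((T.card : ℝ)) ≤ (C / δ) ^ n := by
            rw [hcast]
            exact pow_le_pow_left₀ hK0' hKR n
          have hrpow : δ ^ ((n:ℝ) + 1) = δ ^ (n + 1) := by
            rw [show ((n:ℝ) + 1) = ((n + 1 : ℕ) : ℝ) by push_cast; ring,
              Real.rpow_natCast]
          rw [hrpow]
          have hδpow : (0:ℝ) < δ ^ (n + 1) := by positivity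
          calc (T.card : ℝ) * δ ^ (n + 1)
              ≤ (C / δ) ^ n * δ ^ (n + 1) := by
                exact mul_le_mul_of_nonneg_right hpow hδpow.le
            _ = C ^ n * δ := by
                rw [div_pow, pow_succ]
                field_simp
            _ ≤ ε := by
                calc C ^ n * δ ≤ C ^ n * (ε / C ^ n) := by
                      apply mul_le_mul_of_nonneg_left hδε (by positivity)
                  _ = ε := by field_simp

lemma cont_of_S {S : ℝ → Set ℝ} {M : ℝ} (hM : 0 ≤ M)
    (hnn : ∀ θ ∈ Ioc (0:ℝ) 1, ∀ s ∈ S θ, 0 ≤ s)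
    (hMmem : ∀ θ ∈ Ioc (0:ℝ) 1, M ∈ S θ)
    (hanti : ∀ θ φ, θ ∈ Ioc (0:ℝ) 1 → φ ∈ Ioc (0:ℝ) 1 → θ ≤ φ → S φ ⊆ S θ)
    (hscale : ∀ θ φ, θ ∈ Ioc (0:ℝ) 1 → φ ∈ Ioc (0:ℝ) 1 → θ ≤ φ →
      ∀ s ∈ S θ, s * φ / θ ∈ S φ) :
    ContinuousOn (fun θ => sInf (S θ)) (Ioc 0 1) := by
  set g : ℝ → ℝ := fun θ => sInf (S θ) with hg
  have hbdd : ∀ θ ∈ Ioc (0:ℝ) 1, BddBelow (S θ) := fun θ hθ => ⟨0, fun s hs => hnn θ hθ s hs⟩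
  have hne : ∀ θ ∈ Ioc (0:ℝ) 1, (S θ).Nonempty := fun θ hθ => ⟨M, hMmem θ hθ⟩
  have hgnn : ∀ θ ∈ Ioc (0:ℝ) 1, 0 ≤ g θ := fun θ hθ =>
    Real.sInf_nonneg fun s hs => hnn θ hθ s hs
  have hgM : ∀ θ ∈ Ioc (0:ℝ) 1, g θ ≤ M := fun θ hθ => csInf_le (hbdd θ hθ) (hMmem θ hθ)
  have hmono : ∀ θ ∈ Ioc (0:ℝ) 1, ∀ φ ∈ Ioc (0:ℝ) 1, θ ≤ φ → g θ ≤ g φ := by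
    intro θ hθ φ hφ hle
    exact csInf_le_csInf (hbdd θ hθ) (hne φ hφ) (hanti θ φ hθ hφ hle)
  have hlip : ∀ θ ∈ Ioc (0:ℝ) 1, ∀ φ ∈ Ioc (0:ℝ) 1, θ ≤ φ →
      g φ - g θ ≤ M * (φ - θ) / θ := by
    intro θ hθ φ hφ hle
    have hθ0 := hθ.1
    have hφ0 := hφ.1
    have key : g φ * θ / φ ≤ g θ := by
      apply le_csInf (hne θ hθ)
      intro s hs
      have h1 : g φ ≤ s * φ / θ := csInf_le (hbdd φ hφ) (hscale θ φ hθ hφ hle s hs)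
      have h1' : g φ * θ ≤ s * φ := by rw [le_div_iff₀ hθ0] at h1; exact h1
      rw [div_le_iff₀ hφ0]
      linarith
    have key' : g φ * θ ≤ g θ * φ := by rw [div_le_iff₀ hφ0] at key; linarith
    have h2 : g φ ≤ g θ * φ / θ := by
      rw [le_div_iff₀ hθ0]
      linarith
    have h3 := hgM θ hθ
    have h4 := hgnn θ hθ
    rw [le_div_iff₀ hθ0]
    nlinarith [key', mul_le_mul_of_nonneg_right h3 (sub_nonneg.2 hle)]
  intro θ₀ hθ₀
  rw [Metric.continuousWithinAt_iff]
  intro ε hε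
  have hθ₀0 := hθ₀.1
  refine ⟨min (θ₀ / 2) (ε * θ₀ / (2 * (M + 1))), by positivity, ?_⟩
  intro x hx hdist
  rw [Real.dist_eq] at hdist ⊢
  have hd1 : |x - θ₀| < θ₀ / 2 := hdist.trans_le (min_le_left _ _)
  have hd2 : |x - θ₀| < ε * θ₀ / (2 * (M + 1)) := hdist.trans_le (min_le_right _ _)
  have hx2 : θ₀ / 2 < x := by
    have := abs_lt.mp hd1
    linarith [this.1]
  rcases le_total x θ₀ with hc | hc
  · have h5 := hlip x hx θ₀ hθ₀ hc
    have h6 := hmono x hx θ₀ hθ₀ hc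
    have h7 : g θ₀ - g x ≤ M * (θ₀ - x) / x := h5
    have habs : |g x - g θ₀| = g θ₀ - g x := by
      rw [abs_sub_comm]; exact abs_of_nonneg (by linarith)
    rw [habs]
    have hax : |x - θ₀| = θ₀ - x := by rw [abs_sub_comm]; exact abs_of_nonneg (by linarith)
    rw [hax] at hd2
    have hxpos : (0:ℝ) < x := hx.1
    have hMq : M * (ε * θ₀ / (2 * (M + 1))) ≤ ε * θ₀ / 2 := by
      rw [mul_div_assoc', div_le_div_iff₀ (by linarith) (by norm_num : (0:ℝ) < 2)]
      nlinarith [mul_pos hε hθ₀0]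
    have h9 : M * (θ₀ - x) / x < ε := by
      rw [div_lt_iff₀ hxpos]
      have h10 : M * (θ₀ - x) ≤ M * (ε * θ₀ / (2 * (M + 1))) :=
        mul_le_mul_of_nonneg_left hd2.le hM
      have h11 : ε * (θ₀ / 2) < ε * x := mul_lt_mul_of_pos_left hx2 hε
      nlinarith
    linarith
  · have h5 := hlip θ₀ hθ₀ x hx hc
    have h6 := hmono θ₀ hθ₀ x hx hc
    have habs : |g x - g θ₀| = g x - g θ₀ := abs_of_nonneg (by linarith)
    rw [habs]
    have hax : |x - θ₀| = x - θ₀ := abs_of_nonneg (by linarith)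
    rw [hax] at hd2
    have hMq : M * (ε * θ₀ / (2 * (M + 1))) ≤ ε * θ₀ / 2 := by
      rw [mul_div_assoc', div_le_div_iff₀ (by linarith) (by norm_num : (0:ℝ) < 2)]
      nlinarith [mul_pos hε hθ₀0]
    have h8 : M * (x - θ₀) / θ₀ < ε := by
      rw [div_lt_iff₀ hθ₀0]
      have h10 : M * (x - θ₀) ≤ M * (ε * θ₀ / (2 * (M + 1))) :=
        mul_le_mul_of_nonneg_left hd2.le hM
      nlinarith [mul_pos hε hθ₀0]
    linarith

end Aux

theorem stmt8 (n : ℕ) (F : Set (EuclideanSpace ℝ (Fin n)))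
    (hF : Bornology.IsBounded F) :
    ContinuousOn (fun θ => lowerInterDim θ F) (Set.Ioc (0:ℝ) 1) ∧
    ContinuousOn (fun θ => upperInterDim θ F) (Set.Ioc (0:ℝ) 1) := by
  rcases Nat.eq_zero_or_pos n with hn | hn
  · -- degenerate case n = 0
    subst hn
    haveI hsub : Subsingleton (EuclideanSpace ℝ (Fin 0)) :=
      ⟨fun a b => PiLp.ext fun i => i.elim0⟩
    have hval : ∀ θ ∈ Ioc (0:ℝ) 1, lowerInterDim θ F = 0 ∧ upperInterDim θ F = 0 := by
      intro θ hθ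
      rcases F.eq_empty_or_nonempty with hFe | hFne
      · subst hFe
        have hcov : ∀ δ s ε : ℝ, interCoverSum θ δ s ε (∅ : Set (EuclideanSpace ℝ (Fin 0))) := by
          intro δ s ε
          refine ⟨∅, countable_empty, by simp, by simp, ?_⟩
          have : ∑' U : ↥(∅ : Set (Set (EuclideanSpace ℝ (Fin 0)))),
              EMetric.diam (U : Set (EuclideanSpace ℝ (Fin 0))) ^ s = 0 := by
            simp
          rw [this]
          exact zero_le
        have hup : (0:ℝ) ∈ upSet θ (∅ : Set (EuclideanSpace ℝ (Fin 0))) :=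
          ⟨le_rfl, fun ε hε => ⟨1, one_pos, fun δ hδ hδ1 => hcov δ 0 ε⟩⟩
        have hlow : (0:ℝ) ∈ lowSet θ (∅ : Set (EuclideanSpace ℝ (Fin 0))) :=
          upSet_subset_lowSet θ _ hup
        constructor
        · exact le_antisymm (csInf_le ⟨0, fun s hs => hs.1⟩ hlow)
            (Real.sInf_nonneg fun s hs => hs.1)
        · exact le_antisymm (csInf_le ⟨0, fun s hs => hs.1⟩ hup)
            (Real.sInf_nonneg fun s hs => hs.1)
      · have hemptyS : lowSet θ F = ∅ := by
          rw [eq_empty_iff_forall_notMem]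
          rintro s ⟨h0, h⟩
          obtain ⟨δ, hδ, hδ1, 𝒰, hc, hcovF, hd, hsum⟩ := h 1 one_pos 1 one_pos
          obtain ⟨x, hx⟩ := hFne
          obtain ⟨U, hU, hxU⟩ := hcovF hx
          have h1 := (hd U hU).2 (ne_of_gt hθ.1)
          have h2 : EMetric.diam U = 0 :=
            EMetric.diam_subsingleton (Set.subsingleton_of_subsingleton)
          rw [h2, le_zero_iff, ENNReal.ofReal_eq_zero] at h1
          have h3 : (0:ℝ) < δ ^ (1/θ) := Real.rpow_pos_of_pos hδ _
          linarith
        have hemptyS' : upSet θ F = ∅ :=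
          eq_empty_of_subset_empty (hemptyS ▸ upSet_subset_lowSet θ F)
        constructor
        · show sInf (lowSet θ F) = 0
          rw [hemptyS, Real.sInf_empty]
        · show sInf (upSet θ F) = 0
          rw [hemptyS', Real.sInf_empty]
    constructor
    · exact (continuousOn_const (c := (0:ℝ))).congr fun θ hθ => (hval θ hθ).1
    · exact (continuousOn_const (c := (0:ℝ))).congr fun θ hθ => (hval θ hθ).2
  · -- main case n ≥ 1
    have hM : (0:ℝ) ≤ (n:ℝ) + 1 := by positivity
    constructor
    · exact cont_of_S (S := fun θ => lowSet θ F) (M := (n:ℝ) + 1) hM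
        (fun θ hθ s hs => hs.1)
        (fun θ hθ => upSet_subset_lowSet θ F (mem_upSet_bound hn hF hθ.1 hθ.2))
        (fun θ φ hθ hφ hle => lowSet_anti hθ.1 hle F)
        (fun θ φ hθ hφ hle s hs => lowSet_scale hn hθ.1 hle hφ.2 hs)
    · exact cont_of_S (S := fun θ => upSet θ F) (M := (n:ℝ) + 1) hM
        (fun θ hθ s hs => hs.1)
        (fun θ hθ => mem_upSet_bound hn hF hθ.1 hθ.2)
        (fun θ φ hθ hφ hle => upSet_anti hθ.1 hle F)
        (fun θ φ hθ hφ hle s hs => upSet_scale hn hθ.1 hle hφ.2 hs)
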